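/- There are no polynomials f, g ∈ ℚ[t] with deg f = 2 and deg g = 6 such that f·g divides f⁴ − 4g² + 4 in ℚ[t]. -/

import Mathlib

open Polynomial

-- A linear rational polynomial has a rational root.
private lemma root_lin (e : ℚ[X]) (he : e.natDegree = 1) : ∃ α : ℚ, e.eval α = 0 := by
  have h1 : e.coeff 1 ≠ 0 := by
    have h0 : e ≠ 0 := fun h => by simp [h] at he
    have : e.leadingCoeff ≠ 0 := leadingCoeff_ne_zero.mpr h0
    rwa [leadingCoeff, he] at this
  refine ⟨-(e.coeff 0)/(e.coeff 1), ?_⟩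
  conv_lhs => arg 2; rw [eq_X_add_C_of_natDegree_le_one he.le]
  simp only [eval_add, eval_mul, eval_C, eval_X]
  field_simp
  ring

-- An odd-degree real polynomial with nonnegative leading coefficient has a root.
private lemma odd_root_aux (P : ℝ[X]) (hodd : Odd P.natDegree) (hlc : 0 ≤ P.leadingCoeff) :
    ∃ x : ℝ, P.eval x = 0 := by
  have hn : P.natDegree ≠ 0 := by rcases hodd with ⟨k, hk⟩; omega
  have hdeg : 0 < P.degree := natDegree_pos_iff_degree_pos.mp (Nat.pos_of_ne_zero hn)
  obtain ⟨b, hb⟩ :=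
    ((P.tendsto_atTop_of_leadingCoeff_nonneg hdeg hlc).eventually_ge_atTop 1).exists
  set Q := P.comp (-X) with hQ
  have hQdeg : Q.natDegree = P.natDegree := by
    rw [hQ, natDegree_comp]; simp
  have hQlc : Q.leadingCoeff ≤ 0 := by
    rw [hQ, leadingCoeff_comp (by simp)]
    have hX : (-X : ℝ[X]).leadingCoeff = -1 := by simp
    rw [hX, hodd.neg_one_pow]
    linarith
  have hQdeg' : 0 < Q.degree :=
    natDegree_pos_iff_degree_pos.mp (by rw [hQdeg]; exact Nat.pos_of_ne_zero hn)
  obtain ⟨a, ha⟩ :=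
    ((Q.tendsto_atBot_of_leadingCoeff_nonpos hQdeg' hQlc).eventually_le_atBot (-1)).exists
  have ha' : P.eval (-a) ≤ -1 := by rwa [hQ, eval_comp, eval_neg, eval_X] at ha
  have h0 : (0:ℝ) ∈ Set.Icc (P.eval (-a)) (P.eval b) := ⟨by linarith, by linarith⟩
  obtain ⟨x, hx⟩ := intermediate_value_univ (-a) b P.continuous h0
  exact ⟨x, hx⟩

private lemma odd_root (P : ℝ[X]) (hodd : Odd P.natDegree) : ∃ x : ℝ, P.eval x = 0 := by
  rcases le_total 0 P.leadingCoeff with h | h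
  · exact odd_root_aux P hodd h
  · obtain ⟨x, hx⟩ := odd_root_aux (-P) (by rwa [natDegree_neg]) (by rw [leadingCoeff_neg]; linarith)
    exact ⟨x, by rw [eval_neg] at hx; linarith⟩

private lemma natdeg_quad (f : ℚ[X]) (hf : f.natDegree = 2) (s : ℚ) :
    (f^2 + C s * f + 2).natDegree = 4 := by
  have hf0 : f ≠ 0 := fun h => by simp [h] at hf
  compute_degree
  · rw [hf]
    norm_num
    exact hf0
  all_goals rw [hf]
  all_goals omega

-- Divisors of f^2 + C s * f + 2 (with s^2 = 4) have no real roots.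
private lemma no_real_root (f p : ℚ[X]) (s : ℚ) (hs : s^2 = 4)
    (hdvd : p ∣ f^2 + C s * f + 2) (x : ℝ) :
    (p.map (algebraMap ℚ ℝ)).eval x ≠ 0 := by
  obtain ⟨w, hw⟩ := hdvd
  have hs' : (algebraMap ℚ ℝ s)^2 = 4 := by
    rw [eq_ratCast]
    exact_mod_cast congrArg (fun q : ℚ => (q : ℝ)) hs
  have hpos : 0 < (((f^2 + C s * f + 2 : ℚ[X])).map (algebraMap ℚ ℝ)).eval x := by
    simp only [Polynomial.map_add, Polynomial.map_mul, Polynomial.map_pow, map_C,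
      Polynomial.map_ofNat, eval_add, eval_mul, eval_pow, eval_C, eval_ofNat]
    nlinarith [sq_nonneg ((f.map (algebraMap ℚ ℝ)).eval x + (algebraMap ℚ ℝ s)/2), hs']
  intro h0
  rw [hw, Polynomial.map_mul, eval_mul, h0, zero_mul] at hpos
  exact lt_irrefl _ hpos

-- If C lam * f = 2p - C c with lam ≠ 0 and p is a degree-2 divisor of f^2 + C s f + 2, contradiction.
private lemma unit_case (f p : ℚ[X]) (s c lam : ℚ) (hs : s^2 = 4) (hlam : lam ≠ 0)
    (heq : C lam * f = 2*p - C c) (hdvd : p ∣ f^2 + C s * f + 2) (hpd : p.natDegree = 2) :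
    False := by
  have key : (C lam)^2 * (f^2 + C s * f + 2) =
      p * (4*p - 4*C c + 2*C s*C lam) + ((C c)^2 - C s * C lam * C c + 2*(C lam)^2) := by
    linear_combination (C lam * f + 2*p - C c + C s * C lam) * heq
  have hpK : p ∣ (C c)^2 - C s * C lam * C c + 2*(C lam)^2 := by
    have h1 : p ∣ (C lam)^2 * (f^2 + C s * f + 2) := hdvd.mul_left _
    rw [key] at h1
    simpa using h1.sub (dvd_mul_right p (4*p - 4*C c + 2*C s*C lam))
  have hKC : (C c)^2 - C s * C lam * C c + 2*(C lam)^2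
      = C (c^2 - s*lam*c + 2*lam^2) := by
    simp only [map_sub, map_add, map_mul, map_pow, map_ofNat]
  have hl2 : 0 < lam^2 := (sq_nonneg lam).lt_of_ne (Ne.symm (pow_ne_zero 2 hlam))
  have hk : c^2 - s*lam*c + 2*lam^2 ≠ 0 := by
    nlinarith [sq_nonneg (2*c - s*lam)]
  have hle := natDegree_le_of_dvd (hKC ▸ hpK) (C_ne_zero.mpr hk)
  rw [natDegree_C, hpd] at hle
  omega

private lemma main_key (f g p : ℚ[X]) (s c : ℚ) (hf : f.natDegree = 2) (hc : c ≠ 0)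
    (hs : s^2 = 4) (hp : p ∣ f^2 + C s * f + 2) (hpd : p.natDegree = 2)
    (hmod : f ∣ g * C c - 2 * p) (hfg : f ∣ g^2 - 1) : False := by
  have hf0 : f ≠ 0 := fun h => by simp [h] at hf
  have hdvd2 : f ∣ (2*p - C c) * (2*p + C c) := by
    have h1 : f ∣ (C c)^2 * (g^2 - 1) := hfg.mul_left _
    have h2 : f ∣ (g * C c - 2*p) * (g * C c + 2*p) := hmod.mul_right _
    have hid : (2*p - C c) * (2*p + C c)
        = (C c)^2 * (g^2 - 1) - (g * C c - 2*p) * (g * C c + 2*p) := by ring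
    rw [hid]
    exact dvd_sub h1 h2
  obtain ⟨e₁, e₂, he₁, he₂, hfe⟩ := exists_dvd_and_dvd_of_dvd_mul hdvd2
  have he₁0 : e₁ ≠ 0 := by rintro rfl; rw [zero_mul] at hfe; exact hf0 hfe
  have he₂0 : e₂ ≠ 0 := by rintro rfl; rw [mul_zero] at hfe; exact hf0 hfe
  have hsum : e₁.natDegree + e₂.natDegree = 2 := by
    rw [← natDegree_mul he₁0 he₂0, ← hfe, hf]
  have hC2 : ((2:ℚ[X])) = C 2 := (map_ofNat C 2).symm
  -- helper to finish in the "f divides one factor" cases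
  have finish : ∀ c' : ℚ, c' ≠ 0 → f ∣ 2*p - C c' → False := by
    intro c' hc' hfd
    obtain ⟨w, hw⟩ := hfd
    have hq1' : (2*p - C c').natDegree = 2 := by
      rw [natDegree_sub_C, hC2, natDegree_C_mul (two_ne_zero), hpd]
    have hw0 : w ≠ 0 := by
      rintro rfl; rw [mul_zero] at hw; rw [hw] at hq1'; simp at hq1'
    have hwd : w.natDegree = 0 := by
      have h := hq1'
      rw [hw, natDegree_mul hf0 hw0, hf] at h
      omega
    obtain ⟨lam, hwC⟩ : ∃ l, w = C l := ⟨w.coeff 0, eq_C_of_natDegree_eq_zero hwd⟩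
    have hwc0 : lam ≠ 0 := fun h => hw0 (by rw [hwC, h, map_zero])
    refine unit_case f p s c' lam hs hwc0 ?_ hp hpd
    rw [hw, hwC]
    ring
  rcases (show e₁.natDegree = 0 ∨ e₁.natDegree = 1 ∨ e₁.natDegree = 2 by omega) with h | h | h
  · -- e₁ is a nonzero constant, so f ∣ 2p + C c
    obtain ⟨u, hu⟩ : ∃ u, e₁ = C u := ⟨e₁.coeff 0, eq_C_of_natDegree_eq_zero h⟩
    have hu0 : u ≠ 0 := fun hh => he₁0 (by rw [hu, hh, map_zero])
    have hfd : f ∣ 2*p + C c := by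
      refine dvd_trans ⟨C u⁻¹, ?_⟩ he₂
      rw [hfe, hu, mul_comm (C u) e₂, mul_assoc, ← C_mul,
        mul_inv_cancel₀ hu0, C_1, mul_one]
    apply finish (-c) (neg_ne_zero.mpr hc)
    rwa [map_neg, sub_neg_eq_add]
  · -- both factors of f are linear: sign change of p on ℝ, contradiction
    have he₂d : e₂.natDegree = 1 := by omega
    obtain ⟨α, hα⟩ := root_lin e₁ h
    obtain ⟨β, hβ⟩ := root_lin e₂ he₂d
    have hpα : p.eval α = c/2 := by
      obtain ⟨v, hv⟩ := he₁
      have hev : (2*p - C c).eval α = 0 := by rw [hv, eval_mul, hα, zero_mul]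
      simp only [eval_sub, eval_mul, eval_ofNat, eval_C] at hev
      linarith
    have hpβ : p.eval β = -(c/2) := by
      obtain ⟨v, hv⟩ := he₂
      have hev : (2*p + C c).eval β = 0 := by rw [hv, eval_mul, hβ, zero_mul]
      simp only [eval_add, eval_mul, eval_ofNat, eval_C] at hev
      linarith
    have keyev : ∀ γ : ℚ, (p.map (algebraMap ℚ ℝ)).eval ((γ:ℝ)) = ((p.eval γ : ℚ) : ℝ) := by
      intro γ
      rw [eval_map, show ((γ:ℝ)) = algebraMap ℚ ℝ γ from (eq_ratCast _ γ).symm,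
        eval₂_at_apply, eq_ratCast]
    have hnz : ∀ x : ℝ, (p.map (algebraMap ℚ ℝ)).eval x ≠ 0 := no_real_root f p s hs hp
    rcases hc.lt_or_gt with hneg | hpos
    · have hmem : (0:ℝ) ∈ Set.Icc ((fun x => eval x (p.map (algebraMap ℚ ℝ))) (α:ℝ))
          ((fun x => eval x (p.map (algebraMap ℚ ℝ))) (β:ℝ)) := by
        simp only
        rw [keyev α, keyev β, hpα, hpβ]
        constructor
        · exact_mod_cast (by linarith : (c/2:ℚ) ≤ 0)
        · exact_mod_cast (by linarith : (0:ℚ) ≤ -(c/2))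
      obtain ⟨x, hx⟩ :=
        intermediate_value_univ (α:ℝ) (β:ℝ) (p.map (algebraMap ℚ ℝ)).continuous hmem
      exact hnz x hx
    · have hmem : (0:ℝ) ∈ Set.Icc ((fun x => eval x (p.map (algebraMap ℚ ℝ))) (β:ℝ))
          ((fun x => eval x (p.map (algebraMap ℚ ℝ))) (α:ℝ)) := by
        simp only
        rw [keyev α, keyev β, hpα, hpβ]
        constructor
        · exact_mod_cast (by linarith : (-(c/2):ℚ) ≤ 0)
        · exact_mod_cast (by linarith : (0:ℚ) ≤ (c/2:ℚ))
      obtain ⟨x, hx⟩ :=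
        intermediate_value_univ (β:ℝ) (α:ℝ) (p.map (algebraMap ℚ ℝ)).continuous hmem
      exact hnz x hx
  · -- e₁ has degree 2, so f ∣ 2p - C c
    obtain ⟨u, hu⟩ : ∃ u, e₂ = C u := ⟨e₂.coeff 0, eq_C_of_natDegree_eq_zero (by omega)⟩
    have hu0 : u ≠ 0 := fun hh => he₂0 (by rw [hu, hh, map_zero])
    have hfd : f ∣ 2*p - C c := by
      refine dvd_trans ⟨C u⁻¹, ?_⟩ he₁
      rw [hfe, hu, mul_assoc, ← C_mul, mul_inv_cancel₀ hu0, C_1, mul_one]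
    exact finish c hc hfd

theorem quartic_congruence_no_sol_deg2_deg6 :
    ¬ ∃ f g : ℚ[X], f.natDegree = 2 ∧ g.natDegree = 6 ∧
        f * g ∣ f ^ 4 - 4 * g ^ 2 + 4 := by
  rintro ⟨f, g, hf, hg, hdvd⟩
  have hf0 : f ≠ 0 := fun h => by simp [h] at hf
  have hg0 : g ≠ 0 := fun h => by simp [h] at hg
  have hC2 : ((2:ℚ[X])) = C 2 := (map_ofNat C 2).symm
  have hA : (f^2 + C (-2) * f + 2).natDegree = 4 := natdeg_quad f hf (-2)
  have hB : (f^2 + C 2 * f + 2).natDegree = 4 := natdeg_quad f hf 2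
  have hA0 : (f^2 + C (-2) * f + 2) ≠ 0 := fun h => by rw [h] at hA; simp at hA
  have hB0 : (f^2 + C 2 * f + 2) ≠ 0 := fun h => by rw [h] at hB; simp at hB
  have hgAB : g ∣ (f^2 + C (-2) * f + 2) * (f^2 + C 2 * f + 2) := by
    have h1 : g ∣ f^4 - 4*g^2 + 4 := (dvd_mul_left g f).trans hdvd
    have hid : (f^2 + C (-2) * f + 2) * (f^2 + C 2 * f + 2)
        = (f^4 - 4*g^2 + 4) + 4*g^2 := by
      rw [show (C (-2:ℚ) : ℚ[X]) = -2 by rw [map_neg, ← hC2], ← hC2]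
      ring
    rw [hid]
    exact dvd_add h1 ((dvd_pow_self g two_ne_zero).mul_left 4)
  have hfg2 : f ∣ g^2 - 1 := by
    have h1 : f ∣ f^4 - 4*g^2 + 4 := (dvd_mul_right f g).trans hdvd
    have h2 : f ∣ f^4 := dvd_pow_self f (by norm_num)
    have h3 : f ∣ C 4 * (g^2 - 1) := by
      have hid : C (4:ℚ) * (g^2 - 1) = f^4 - (f^4 - 4*g^2 + 4) := by
        rw [show (C (4:ℚ) : ℚ[X]) = 4 from map_ofNat C 4]
        ring
      rw [hid]
      exact dvd_sub h2 h1
    have hid2 : g^2 - 1 = C (4⁻¹ : ℚ) * (C 4 * (g^2-1)) := by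
      rw [← mul_assoc, ← C_mul]
      norm_num
    rw [hid2]
    exact h3.mul_left _
  obtain ⟨g₁, g₂, h1, h2, hgeq⟩ := exists_dvd_and_dvd_of_dvd_mul hgAB
  have hg₁0 : g₁ ≠ 0 := by rintro rfl; rw [zero_mul] at hgeq; exact hg0 hgeq
  have hg₂0 : g₂ ≠ 0 := by rintro rfl; rw [mul_zero] at hgeq; exact hg0 hgeq
  have hsum : g₁.natDegree + g₂.natDegree = 6 := by
    rw [← natDegree_mul hg₁0 hg₂0, ← hgeq, hg]
  have hle1 : g₁.natDegree ≤ 4 := hA ▸ natDegree_le_of_dvd h1 hA0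
  have hle2 : g₂.natDegree ≤ 4 := hB ▸ natDegree_le_of_dvd h2 hB0
  have hnot3 : g₁.natDegree ≠ 3 := by
    intro h3
    have hd : (g₁.map (algebraMap ℚ ℝ)).natDegree = 3 := by
      rw [natDegree_map]; exact h3
    obtain ⟨x, hx⟩ := odd_root _ (by rw [hd]; exact ⟨1, rfl⟩)
    exact no_real_root f g₁ (-2) (by norm_num) h1 x hx
  rcases (show g₁.natDegree = 2 ∨ g₁.natDegree = 4 by omega) with hd1 | hd1
  · -- g₂ has degree 4 = deg B, so B = g₂ * (constant)
    have hd2 : g₂.natDegree = 4 := by omega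
    obtain ⟨w, hw⟩ := h2
    have hw0 : w ≠ 0 := by rintro rfl; rw [mul_zero] at hw; exact hB0 hw
    have hwd : w.natDegree = 0 := by
      have hh := hB
      rw [hw, natDegree_mul hg₂0 hw0, hd2] at hh
      omega
    have hwC : w = C (w.coeff 0) := eq_C_of_natDegree_eq_zero hwd
    have hc0 : w.coeff 0 ≠ 0 := fun hh => hw0 (by rw [hwC, hh, map_zero])
    apply main_key f g g₁ (-2) (w.coeff 0) hf hc0 (by norm_num) h1 hd1 ?_ hfg2
    refine ⟨g₁ * (f + C 2), ?_⟩
    rw [hgeq]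
    calc g₁ * g₂ * C (w.coeff 0) - 2*g₁ = g₁ * (g₂ * w) - 2*g₁ := by rw [← hwC]; ring
      _ = g₁ * (f^2 + C 2 * f + 2) - 2*g₁ := by rw [← hw]
      _ = f * (g₁ * (f + C 2)) := by rw [← hC2]; ring
  · -- g₁ has degree 4 = deg A, so A = g₁ * (constant)
    have hd2 : g₂.natDegree = 2 := by omega
    obtain ⟨w, hw⟩ := h1
    have hw0 : w ≠ 0 := by rintro rfl; rw [mul_zero] at hw; exact hA0 hw
    have hwd : w.natDegree = 0 := by
      have hh := hA
      rw [hw, natDegree_mul hg₁0 hw0, hd1] at hh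
      omega
    have hwC : w = C (w.coeff 0) := eq_C_of_natDegree_eq_zero hwd
    have hc0 : w.coeff 0 ≠ 0 := fun hh => hw0 (by rw [hwC, hh, map_zero])
    apply main_key f g g₂ 2 (w.coeff 0) hf hc0 (by norm_num) h2 hd2 ?_ hfg2
    refine ⟨g₂ * (f + C (-2)), ?_⟩
    rw [hgeq]
    calc g₁ * g₂ * C (w.coeff 0) - 2*g₂ = g₂ * (g₁ * w) - 2*g₂ := by rw [← hwC]; ring
      _ = g₂ * (f^2 + C (-2) * f + 2) - 2*g₂ := by rw [← hw]
      _ = f * (g₂ * (f + C (-2))) := by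
          rw [show (C (-2:ℚ) : ℚ[X]) = -2 by rw [map_neg, ← hC2]]
          ring
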